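/- Let A ∈ ℝ^{n×n} be Metzler, let E ∈ ℝ^{n×p} and C ∈ ℝ^{q×n} be entrywise nonnegative, let F ∈ ℝ^{q×p}, let T̄ > 0 and γ ∈ ℝ, and let λ_i, λ_j ∈ ℝ^n. Suppose that Aλ_i + E𝟙 < 0 and that C(λ_i + e^{Aτ}(λ_j − λ_i)) + F𝟙 − γ𝟙 < 0 for all τ ∈ [0,T̄]. Then C(e^{Aτ}λ_j + ∫₀^{τ} e^{A(τ−s)} E𝟙 ds) + F𝟙 < γ𝟙 for all τ ∈ [0,T̄]. -/

import Mathlib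

open Matrix

section BlanchiniAux

open NormedSpace

attribute [local instance] Matrix.linftyOpNormedRing Matrix.linftyOpNormedAlgebra

/-- Auxiliary: entry-after-mulVec as a continuous linear map. -/
noncomputable def entryCLM {n : ℕ} (v : Fin n → ℝ) (k : Fin n) :
    Matrix (Fin n) (Fin n) ℝ →L[ℝ] ℝ :=
  LinearMap.toContinuousLinearMap
    { toFun := fun M => (M *ᵥ v) k
      map_add' := by intro M N; simp [Matrix.add_mulVec]
      map_smul' := by intro c M; simp [Matrix.smul_mulVec] }

@[simp] lemma entryCLM_apply {n : ℕ} (v : Fin n → ℝ) (k : Fin n) (M : Matrix (Fin n) (Fin n) ℝ) :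
    entryCLM v k M = (M *ᵥ v) k := rfl

lemma pow_entry_nonneg {n : ℕ} {B : Matrix (Fin n) (Fin n) ℝ} (hB : ∀ i j, 0 ≤ B i j) (m : ℕ) :
    ∀ i j, 0 ≤ (B ^ m) i j := by
  induction m with
  | zero => intro i j; by_cases h : i = j <;> simp [pow_zero, Matrix.one_apply, h]
  | succ m ih =>
    intro i j
    rw [pow_succ, Matrix.mul_apply]
    exact Finset.sum_nonneg fun l _ => mul_nonneg (ih i l) (hB l j)

lemma exp_entry_nonneg_of_nonneg {n : ℕ} {B : Matrix (Fin n) (Fin n) ℝ}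
    (hB : ∀ i j, 0 ≤ B i j) : ∀ i j, 0 ≤ exp B i j := by
  intro i j
  have h0 : exp B i j = (exp B *ᵥ Pi.single j 1) i := by simp [Matrix.mulVec_single]
  rw [h0, ← entryCLM_apply (Pi.single j 1) i, exp_eq_tsum ℝ,
    (entryCLM (Pi.single j 1) i).map_tsum (expSeries_summable' (𝕂 := ℝ) B)]
  refine tsum_nonneg fun m => ?_
  simp only [_root_.map_smul, entryCLM_apply, smul_eq_mul, Matrix.mulVec_single, mul_one]
  exact mul_nonneg (by positivity) (by simpa using pow_entry_nonneg hB m i j)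

end BlanchiniAux

/-- A square real matrix is Metzler if all its off-diagonal entries are nonnegative. -/
def Metzler {n : ℕ} (A : Matrix (Fin n) (Fin n) ℝ) : Prop :=
  ∀ i j, i ≠ j → 0 ≤ A i j

section BlanchiniAux2

open NormedSpace

attribute [local instance] Matrix.linftyOpNormedRing Matrix.linftyOpNormedAlgebra

lemma metzler_exp_nonneg {n : ℕ} {A : Matrix (Fin n) (Fin n) ℝ} (hA : Metzler A) {t : ℝ}
    (ht : 0 ≤ t) : ∀ i j, 0 ≤ exp (t • A) i j := by
  set c : ℝ := ∑ k, |A k k| with hc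
  have hB : ∀ i j, 0 ≤ (t • (A + c • (1 : Matrix (Fin n) (Fin n) ℝ))) i j := by
    intro i j
    refine mul_nonneg ht ?_
    by_cases h : i = j
    · subst h
      have h1 : |A i i| ≤ c :=
        Finset.single_le_sum (fun k _ => abs_nonneg (A k k)) (Finset.mem_univ i)
      have := neg_abs_le (A i i)
      simp [Matrix.add_apply, Matrix.smul_apply, Matrix.one_apply]
      linarith
    · simp [Matrix.add_apply, Matrix.smul_apply, Matrix.one_apply, h, hA i j h]
  have key : exp (t • (A + c • (1 : Matrix (Fin n) (Fin n) ℝ)))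
      = Real.exp (t * c) • exp (t • A) := by
    have hcomm : Commute (t • A) ((t * c) • (1 : Matrix (Fin n) (Fin n) ℝ)) := by
      simpa using ((Commute.one_right (t • A)).smul_right (t * c))
    have h2 : t • (A + c • (1 : Matrix (Fin n) (Fin n) ℝ))
        = t • A + (t * c) • (1 : Matrix (Fin n) (Fin n) ℝ) := by
      rw [smul_add, smul_smul]
    rw [h2]
    erw [exp_add_of_commute hcomm]
    have h3 : exp ((t * c) • (1 : Matrix (Fin n) (Fin n) ℝ))
        = Real.exp (t * c) • (1 : Matrix (Fin n) (Fin n) ℝ) := by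
      rw [← Algebra.algebraMap_eq_smul_one]
      erw [← algebraMap_exp_comm]
      rw [
        Real.exp_eq_exp_ℝ, Algebra.algebraMap_eq_smul_one]
    erw [h3]
    rw [mul_smul_comm, mul_one]
    rfl
  intro i j
  have h4 : exp (t • A) i j
      = (Real.exp (t * c))⁻¹ * exp (t • (A + c • (1 : Matrix (Fin n) (Fin n) ℝ))) i j := by
    rw [key, Matrix.smul_apply, smul_eq_mul, inv_mul_cancel_left₀ (Real.exp_ne_zero _)]
  rw [h4]
  exact mul_nonneg (by positivity) (exp_entry_nonneg_of_nonneg hB i j)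

variable {n : ℕ} (A : Matrix (Fin n) (Fin n) ℝ) (v : Fin n → ℝ) (k : Fin n)

lemma hasDerivAt_exp_mulVec (t : ℝ) :
    HasDerivAt (fun u : ℝ => (exp (u • A) *ᵥ v) k)
      ((exp (t • A) *ᵥ (A *ᵥ v)) k) t := by
  have h := hasDerivAt_exp_smul_const (𝕂 := ℝ) A t
  have h2 := (entryCLM v k).hasFDerivAt.comp_hasDerivAt t h
  rw [Matrix.mulVec_mulVec]
  exact h2

lemma continuous_exp_mulVec : Continuous fun u : ℝ => (exp (u • A) *ᵥ v) k :=
  (entryCLM v k).continuous.comp (exp_continuous.comp (continuous_id.smul continuous_const))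

lemma integral_exp_mulVec (τ : ℝ) :
    ∫ s in (0:ℝ)..τ, (exp (s • A) *ᵥ (A *ᵥ v)) k = (exp (τ • A) *ᵥ v) k - v k := by
  have h := intervalIntegral.integral_eq_sub_of_hasDerivAt
    (f := fun u : ℝ => (exp (u • A) *ᵥ v) k)
    (fun t _ => hasDerivAt_exp_mulVec A v k t)
    ((continuous_exp_mulVec A (A *ᵥ v) k).intervalIntegrable 0 τ)
  simpa [exp_zero, Matrix.one_mulVec] using h

end BlanchiniAux2

/-- The minimum dwell-time `L∞`-gain conditions of Blanchini et al. imply the conditions of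
the present paper: from `Aλᵢ + E𝟙 < 0` and
`C(λᵢ + e^{Aτ}(λⱼ − λᵢ)) + F𝟙 − γ𝟙 < 0` on `[0,T̄]` one gets
`C(e^{Aτ}λⱼ + ∫₀^τ e^{A(τ−s)}E𝟙 ds) + F𝟙 < γ𝟙` on `[0,T̄]`. -/
theorem blanchini_implies_new_conditions {n p q : ℕ}
    (A : Matrix (Fin n) (Fin n) ℝ) (hA : Metzler A)
    (E : Matrix (Fin n) (Fin p) ℝ) (C : Matrix (Fin q) (Fin n) ℝ)
    (F : Matrix (Fin q) (Fin p) ℝ)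
    (hE : ∀ i j, 0 ≤ E i j) (hC : ∀ i j, 0 ≤ C i j)
    (Tb γ : ℝ) (hTb : 0 < Tb)
    (lami lamj : Fin n → ℝ)
    (h1 : ∀ i, (A *ᵥ lami + E *ᵥ (fun _ => (1:ℝ))) i < 0)
    (h2 : ∀ τ ∈ Set.Icc (0:ℝ) Tb, ∀ i,
      (C *ᵥ (lami + NormedSpace.exp (τ • A) *ᵥ (lamj - lami))
        + F *ᵥ (fun _ => (1:ℝ))) i - γ < 0) :
    ∀ τ ∈ Set.Icc (0:ℝ) Tb, ∀ i,
      (C *ᵥ (NormedSpace.exp (τ • A) *ᵥ lamj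
          + ∫ s in (0:ℝ)..τ, NormedSpace.exp ((τ - s) • A) *ᵥ (E *ᵥ (fun _ => (1:ℝ))))
        + F *ᵥ (fun _ => (1:ℝ))) i < γ := by
  open NormedSpace in
  intro τ hτ i
  set w : Fin n → ℝ := E *ᵥ (fun _ => (1:ℝ)) with hw
  set I : Fin n → ℝ := ∫ s in (0:ℝ)..τ, exp ((τ - s) • A) *ᵥ w with hIdef
  have hwA : ∀ m, w m ≤ -(A *ᵥ lami) m := by
    intro m
    have := h1 m
    simp only [Pi.add_apply] at this
    linarith
  have hcontVec : Continuous fun s : ℝ => exp ((τ - s) • A) *ᵥ w := by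
    apply continuous_pi; intro m
    exact (continuous_exp_mulVec A w m).comp (continuous_const.sub continuous_id)
  have hIk : ∀ m, I m = ∫ s in (0:ℝ)..τ, (exp ((τ - s) • A) *ᵥ w) m := by
    intro m
    rw [hIdef]
    exact ((ContinuousLinearMap.proj (R := ℝ) (φ := fun _ : Fin n => ℝ) m).intervalIntegral_comp_comm
      (hcontVec.intervalIntegrable 0 τ)).symm
  have hIbound : ∀ m, I m ≤ lami m - (exp (τ • A) *ᵥ lami) m := by
    intro m
    have hflip : (∫ s in (0:ℝ)..τ, (exp ((τ - s) • A) *ᵥ w) m)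
        = ∫ s in (0:ℝ)..τ, (exp (s • A) *ᵥ w) m := by
      have h := intervalIntegral.integral_comp_sub_left
        (a := (0:ℝ)) (b := τ) (fun s : ℝ => (exp (s • A) *ᵥ w) m) τ
      simpa using h
    have hmono : (∫ s in (0:ℝ)..τ, (exp (s • A) *ᵥ w) m)
        ≤ ∫ s in (0:ℝ)..τ, (exp (s • A) *ᵥ (-(A *ᵥ lami))) m := by
      apply intervalIntegral.integral_mono_on hτ.1
        ((continuous_exp_mulVec A w m).intervalIntegrable 0 τ)
        ((continuous_exp_mulVec A (-(A *ᵥ lami)) m).intervalIntegrable 0 τ)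
      intro s hs
      have hexp := metzler_exp_nonneg hA hs.1
      simp only [Matrix.mulVec, dotProduct, Pi.neg_apply]
      exact Finset.sum_le_sum fun l _ => mul_le_mul_of_nonneg_left (hwA l) (hexp m l)
    have hval : (∫ s in (0:ℝ)..τ, (exp (s • A) *ᵥ (-(A *ᵥ lami))) m)
        = lami m - (exp (τ • A) *ᵥ lami) m := by
      have hneg : ∀ s : ℝ, (exp (s • A) *ᵥ (-(A *ᵥ lami))) m
          = -((exp (s • A) *ᵥ (A *ᵥ lami)) m) := by
        intro s; simp [Matrix.mulVec_neg]
      simp_rw [hneg]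
      rw [intervalIntegral.integral_neg, integral_exp_mulVec]
      ring
    rw [hIk m, hflip]
    linarith
  have h2' := h2 τ hτ i
  have hle : (C *ᵥ (exp (τ • A) *ᵥ lamj + I)) i
      ≤ (C *ᵥ (lami + exp (τ • A) *ᵥ (lamj - lami))) i := by
    simp only [Matrix.mulVec, dotProduct]
    refine Finset.sum_le_sum fun m _ => mul_le_mul_of_nonneg_left ?_ (hC i m)
    have hb := hIbound m
    simp only [Pi.add_apply, Matrix.mulVec_sub, Pi.sub_apply]
    linarith
  simp only [Pi.add_apply] at h2' hle ⊢
  linarith
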